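/- Combining the occupancy-difference and total-variation lemmas with Pinsker and the mixture change-of-measure: under assumptions (i) P_{π_f}(s) ≤ C·P_β^T(s) for all s, (ii) P_β^T(g = f(s)|s) ≥ α > 0 for all s, (iii) d_β^T(s) ≤ γ·d_β^S(s) for all s, the RCSL regret satisfies J^T(π_f) − J^T(π̂_f) ≤ (C/α)·((N_S+N_T)/(N_S/γ + N_T))·H²·sqrt(2·L(π̂)), where L(π̂) = E_{s∼d_β^mix, g∼P_β^T(·|s)}[ KL(P_β^T(·|s,g) ‖ π̂(·|s,g)) ]. -/

import Mathlib

open Finset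

/-- State distribution at time `t` induced by policy `π` in an MDP with transition
kernel `P` and initial distribution `ρ`. -/
noncomputable def stateDist {S A : Type*} [Fintype S] [Fintype A]
    (P : S → A → S → ℝ) (ρ : S → ℝ) (π : S → A → ℝ) : ℕ → S → ℝ
  | 0 => ρ
  | (t + 1) => fun s' => ∑ s : S, ∑ a : A, stateDist P ρ π t s * π s a * P s a s'

/-- Normalized state-occupancy measure over horizon `H`. -/
noncomputable def occupancy {S A : Type*} [Fintype S] [Fintype A]
    (P : S → A → S → ℝ) (ρ : S → ℝ) (π : S → A → ℝ) (H : ℕ) (s : S) : ℝ :=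
  (1 / H) * ∑ t ∈ Finset.range H, stateDist P ρ π t s

/-- Expected cumulative reward of policy `π` over horizon `H`. -/
noncomputable def Jval {S A : Type*} [Fintype S] [Fintype A]
    (P : S → A → S → ℝ) (ρ : S → ℝ) (r : S → A → ℝ) (π : S → A → ℝ) (H : ℕ) : ℝ :=
  ∑ t ∈ Finset.range H, ∑ s : S, stateDist P ρ π t s * ∑ a : A, π s a * r s a

private lemma hasDerivAt_G {t : ℝ} (ht : 0 < t) :
    HasDerivAt (fun x : ℝ => Real.log x - 3*(x-1)*(x+5)/(2*(x+2)^2))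
      (1/t - 27/(t+2)^3) t := by
  have h2 : (2*(t+2)^2 : ℝ) ≠ 0 := by positivity
  have hn : HasDerivAt (fun x : ℝ => 3*(x-1)*(x+5)) (3*((t+5)+(t-1))) t := by
    have h1 : HasDerivAt (fun x : ℝ => 3*(x-1)) 3 t := by
      simpa using ((hasDerivAt_id t).sub_const 1).const_mul 3
    have h5 : HasDerivAt (fun x : ℝ => x+5) 1 t := (hasDerivAt_id t).add_const 5
    have := h1.mul h5
    refine this.congr_deriv ?_; ring
  have hd : HasDerivAt (fun x : ℝ => 2*(x+2)^2) (2*(2*(t+2))) t := by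
    have := (((hasDerivAt_id t).add_const 2).pow 2).const_mul 2
    refine this.congr_deriv ?_; simp [id]
  have hq := hn.div hd h2
  have hl := Real.hasDerivAt_log (ne_of_gt ht)
  refine (hl.sub hq).congr_deriv ?_
  have h3 : ((t:ℝ)+2) ≠ 0 := by positivity
  field_simp
  ring

private lemma hasDerivAt_F {t : ℝ} (ht : 0 < t) :
    HasDerivAt (fun x : ℝ => x * Real.log x - x + 1 - 3*(x-1)^2/(2*(x+2)))
      (Real.log t - 3*(t-1)*(t+5)/(2*(t+2)^2)) t := by
  have h2 : (2*(t+2) : ℝ) ≠ 0 := by positivity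
  have hxl : HasDerivAt (fun x : ℝ => x * Real.log x) (Real.log t + 1) t := by
    have := (hasDerivAt_id t).mul (Real.hasDerivAt_log (ne_of_gt ht))
    refine this.congr_deriv ?_
    field_simp; simp [id]; ring
  have hn : HasDerivAt (fun x : ℝ => 3*(x-1)^2) (3*(2*(t-1))) t := by
    have := (((hasDerivAt_id t).sub_const 1).pow 2).const_mul 3
    refine this.congr_deriv ?_; simp [id]
  have hd : HasDerivAt (fun x : ℝ => 2*(x+2)) 2 t := by
    simpa using ((hasDerivAt_id t).add_const 2).const_mul 2
  have hq := hn.div hd h2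
  have := ((hxl.sub (hasDerivAt_id t)).add_const 1).sub hq
  refine this.congr_deriv ?_
  have h3 : ((t:ℝ)+2) ≠ 0 := by positivity
  field_simp
  ring

private lemma G_nonneg {t : ℝ} (ht : 1 ≤ t) :
    0 ≤ Real.log t - 3*(t-1)*(t+5)/(2*(t+2)^2) := by
  set G : ℝ → ℝ := fun x => Real.log x - 3*(x-1)*(x+5)/(2*(x+2)^2) with hG
  have hmono : MonotoneOn G (Set.Ici (1:ℝ)) := by
    apply monotoneOn_of_deriv_nonneg (convex_Ici 1)
    · intro x hx
      exact (hasDerivAt_G (lt_of_lt_of_le one_pos hx)).continuousAt.continuousWithinAt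
    · intro x hx
      rw [interior_Ici] at hx
      exact (hasDerivAt_G (lt_trans one_pos hx)).differentiableAt.differentiableWithinAt
    · intro x hx
      rw [interior_Ici] at hx
      rw [(hasDerivAt_G (lt_trans one_pos hx)).deriv]
      have hx0 : (0:ℝ) < x := lt_trans one_pos hx
      rw [sub_nonneg, div_le_div_iff₀ (by positivity) hx0]
      nlinarith [sq_nonneg (x-1), hx0.le]
  have h1 : G 1 = 0 := by simp [hG]
  have := hmono (Set.self_mem_Ici) (Set.mem_Ici.2 ht) ht
  rw [h1] at this
  exact this

private lemma G_nonpos {t : ℝ} (ht0 : 0 < t) (ht : t ≤ 1) :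
    Real.log t - 3*(t-1)*(t+5)/(2*(t+2)^2) ≤ 0 := by
  set G : ℝ → ℝ := fun x => Real.log x - 3*(x-1)*(x+5)/(2*(x+2)^2) with hG
  have hmono : MonotoneOn G (Set.Icc t 1) := by
    apply monotoneOn_of_deriv_nonneg (convex_Icc t 1)
    · intro x hx
      exact (hasDerivAt_G (lt_of_lt_of_le ht0 hx.1)).continuousAt.continuousWithinAt
    · intro x hx
      have hx' := interior_subset hx
      exact (hasDerivAt_G (lt_of_lt_of_le ht0 hx'.1)).differentiableAt.differentiableWithinAt
    · intro x hx
      have hx' := interior_subset hx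
      have hx0 : (0:ℝ) < x := lt_of_lt_of_le ht0 hx'.1
      rw [(hasDerivAt_G hx0).deriv]
      rw [sub_nonneg, div_le_div_iff₀ (by positivity) hx0]
      nlinarith [sq_nonneg (x-1), hx0.le]
  have h1 : G 1 = 0 := by simp [hG]
  have := hmono (Set.mem_Icc.2 ⟨le_refl t, ht⟩) (Set.mem_Icc.2 ⟨ht, le_refl 1⟩) ht
  rw [h1] at this
  exact this

/-- Key scalar inequality: `3(t-1)²/(2(t+2)) ≤ t log t - t + 1` for `t ≥ 0`. -/
private lemma log_ineq {t : ℝ} (ht : 0 ≤ t) :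
    3*(t-1)^2/(2*(t+2)) ≤ t * Real.log t - t + 1 := by
  rcases eq_or_lt_of_le ht with h0 | ht0
  · rw [← h0]; norm_num
  set F : ℝ → ℝ := fun x => x * Real.log x - x + 1 - 3*(x-1)^2/(2*(x+2)) with hF
  have hF1 : F 1 = 0 := by simp [hF]
  have key : 0 ≤ F t := by
    rcases le_total 1 t with h1 | h1
    · have hmono : MonotoneOn F (Set.Ici (1:ℝ)) := by
        apply monotoneOn_of_deriv_nonneg (convex_Ici 1)
        · intro x hx
          exact (hasDerivAt_F (lt_of_lt_of_le one_pos hx)).continuousAt.continuousWithinAt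
        · intro x hx
          rw [interior_Ici] at hx
          exact (hasDerivAt_F (lt_trans one_pos hx)).differentiableAt.differentiableWithinAt
        · intro x hx
          rw [interior_Ici] at hx
          rw [(hasDerivAt_F (lt_trans one_pos hx)).deriv]
          exact G_nonneg hx.le
      have := hmono Set.self_mem_Ici (Set.mem_Ici.2 h1) h1
      rw [hF1] at this; exact this
    · have hmono : AntitoneOn F (Set.Icc t 1) := by
        apply antitoneOn_of_deriv_nonpos (convex_Icc t 1)
        · intro x hx
          exact (hasDerivAt_F (lt_of_lt_of_le ht0 hx.1)).continuousAt.continuousWithinAt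
        · intro x hx
          have hx' := interior_subset hx
          exact (hasDerivAt_F (lt_of_lt_of_le ht0 hx'.1)).differentiableAt.differentiableWithinAt
        · intro x hx
          have hx' := interior_subset hx
          have hx0 : (0:ℝ) < x := lt_of_lt_of_le ht0 hx'.1
          rw [(hasDerivAt_F hx0).deriv]
          exact G_nonpos hx0 hx'.2
      have := hmono (Set.mem_Icc.2 ⟨le_refl t, h1⟩) (Set.mem_Icc.2 ⟨h1, le_refl 1⟩) h1
      rw [hF1] at this; exact this
  simp only [hF] at key
  linarith

/-- Pointwise form: `p - q + 3(p-q)²/(2(p+2q)) ≤ p log(p/q)`. -/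
private lemma pointwise_kl {p q : ℝ} (hp : 0 ≤ p) (hq : 0 < q) :
    p - q + 3*(p-q)^2/(2*(p+2*q)) ≤ p * Real.log (p / q) := by
  have ht : 0 ≤ p / q := div_nonneg hp hq.le
  have h := log_ineq ht
  have h2 := mul_le_mul_of_nonneg_left h hq.le
  have hq' : (q:ℝ) ≠ 0 := ne_of_gt hq
  have hden : (0:ℝ) < p/q + 2 := by positivity
  have hden2 : (0:ℝ) < p + 2*q := by positivity
  have e1 : q * (3*(p/q-1)^2/(2*(p/q+2))) = 3*(p-q)^2/(2*(p+2*q)) := by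
    field_simp
  have e2 : q * (p/q * Real.log (p/q) - p/q + 1) = p * Real.log (p/q) - p + q := by
    field_simp
  rw [e1, e2] at h2
  linarith

/-- Pinsker's inequality for finite distributions. -/
private lemma pinsker_fin {A : Type*} [Fintype A] (p q : A → ℝ)
    (hp0 : ∀ a, 0 ≤ p a) (hp1 : ∑ a, p a = 1)
    (hq0 : ∀ a, 0 < q a) (hq1 : ∑ a, q a = 1) :
    (∑ a, |p a - q a|)^2 ≤ 2 * ∑ a, p a * Real.log (p a / q a) := by
  have hden : ∀ a, (0:ℝ) < p a + 2 * q a := fun a => by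
    have := hp0 a; have := hq0 a; linarith
  have key : ∑ a, 3*(p a - q a)^2/(2*(p a + 2*q a)) ≤ ∑ a, p a * Real.log (p a / q a) := by
    have h1 : ∑ a, (p a - q a + 3*(p a - q a)^2/(2*(p a + 2*q a)))
        ≤ ∑ a, p a * Real.log (p a / q a) :=
      Finset.sum_le_sum fun a _ => pointwise_kl (hp0 a) (hq0 a)
    have h2 : ∑ a, (p a - q a + 3*(p a - q a)^2/(2*(p a + 2*q a)))
        = ∑ a, 3*(p a - q a)^2/(2*(p a + 2*q a)) := by
      rw [Finset.sum_add_distrib, Finset.sum_sub_distrib, hp1, hq1]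
      ring
    linarith [h2 ▸ h1]
  have cs := Finset.sum_mul_sq_le_sq_mul_sq Finset.univ
    (fun a => Real.sqrt (p a + 2 * q a))
    (fun a => |p a - q a| / Real.sqrt (p a + 2 * q a))
  have e0 : ∀ a : A, Real.sqrt (p a + 2*q a) * (|p a - q a| / Real.sqrt (p a + 2*q a))
      = |p a - q a| := fun a => by
    rw [mul_div_assoc']
    exact mul_div_cancel_left₀ _ (Real.sqrt_ne_zero'.2 (hden a))
  have e1 : ∀ a : A, Real.sqrt (p a + 2*q a) ^ 2 = p a + 2*q a := fun a =>
    Real.sq_sqrt (hden a).le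
  have e2 : ∀ a : A, (|p a - q a| / Real.sqrt (p a + 2*q a)) ^ 2
      = (p a - q a)^2 / (p a + 2*q a) := fun a => by
    rw [div_pow, e1, sq_abs]
  simp only [e0, e1, e2] at cs
  have e3 : ∑ a, (p a + 2*q a) = 3 := by
    rw [Finset.sum_add_distrib, ← Finset.mul_sum, hp1, hq1]; norm_num
  rw [e3] at cs
  have e4 : ∑ a, (p a - q a)^2/(p a + 2*q a)
      ≤ (2/3) * ∑ a, p a * Real.log (p a / q a) := by
    have : ∑ a, 3*(p a - q a)^2/(2*(p a + 2*q a))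
        = (3/2) * ∑ a, (p a - q a)^2/(p a + 2*q a) := by
      rw [Finset.mul_sum]
      apply Finset.sum_congr rfl
      intro a _
      have := hden a
      field_simp
    rw [this] at key; linarith
  nlinarith [key]

section MDP
variable {S A : Type*} [Fintype S] [Fintype A]
variable {P : S → A → S → ℝ} {ρ : S → ℝ} {π π' : S → A → ℝ}

private lemma stateDist_nonneg (hP0 : ∀ s a s', 0 ≤ P s a s') (hρ0 : ∀ s, 0 ≤ ρ s)
    (hπ0 : ∀ s a, 0 ≤ π s a) : ∀ t s, 0 ≤ stateDist P ρ π t s := by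
  intro t
  induction t with
  | zero => exact hρ0
  | succ t ih =>
    intro s'
    apply Finset.sum_nonneg; intro s _
    apply Finset.sum_nonneg; intro a _
    exact mul_nonneg (mul_nonneg (ih s) (hπ0 s a)) (hP0 s a s')

private lemma stateDist_sum_one (hP0 : ∀ s a s', 0 ≤ P s a s')
    (hP1 : ∀ s a, ∑ s' : S, P s a s' = 1)
    (hρ1 : ∑ s : S, ρ s = 1) (hπ1 : ∀ s, ∑ a : A, π s a = 1) :
    ∀ t, ∑ s : S, stateDist P ρ π t s = 1 := by
  intro t
  induction t with
  | zero => exact hρ1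
  | succ t ih =>
    show ∑ s' : S, ∑ s : S, ∑ a : A, stateDist P ρ π t s * π s a * P s a s' = 1
    rw [Finset.sum_comm]
    calc ∑ s : S, ∑ s' : S, ∑ a : A, stateDist P ρ π t s * π s a * P s a s'
        = ∑ s : S, ∑ a : A, ∑ s' : S, stateDist P ρ π t s * π s a * P s a s' := by
          congr 1; funext s; rw [Finset.sum_comm]
      _ = ∑ s : S, ∑ a : A, stateDist P ρ π t s * π s a := by
          congr 1; funext s; congr 1; funext a
          rw [← Finset.mul_sum, hP1, mul_one]
      _ = ∑ s : S, stateDist P ρ π t s := by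
          congr 1; funext s; rw [← Finset.mul_sum, hπ1, mul_one]
      _ = 1 := ih

private lemma err_bound (hP0 : ∀ s a s', 0 ≤ P s a s')
    (hP1 : ∀ s a, ∑ s' : S, P s a s' = 1)
    (hρ0 : ∀ s, 0 ≤ ρ s)
    (hπ0 : ∀ s a, 0 ≤ π s a) (hπ1 : ∀ s, ∑ a : A, π s a = 1)
    (hπ0' : ∀ s a, 0 ≤ π' s a) (hπ1' : ∀ s, ∑ a : A, π' s a = 1) :
    ∀ t, ∑ s : S, |stateDist P ρ π t s - stateDist P ρ π' t s|
      ≤ ∑ t' ∈ Finset.range t, ∑ s : S,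
          stateDist P ρ π t' s * ∑ a : A, |π s a - π' s a| := by
  intro t
  induction t with
  | zero => simp [stateDist]
  | succ t ih =>
    have step : ∑ s' : S, |stateDist P ρ π (t+1) s' - stateDist P ρ π' (t+1) s'|
        ≤ (∑ s : S, |stateDist P ρ π t s - stateDist P ρ π' t s|)
          + ∑ s : S, stateDist P ρ π t s * ∑ a : A, |π s a - π' s a| := by
      have h1 : ∀ s' : S, |stateDist P ρ π (t+1) s' - stateDist P ρ π' (t+1) s'|
          ≤ ∑ s : S, ∑ a : A,
              |stateDist P ρ π t s * π s a - stateDist P ρ π' t s * π' s a| * P s a s' := by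
        intro s'
        show |(∑ s : S, ∑ a : A, stateDist P ρ π t s * π s a * P s a s')
            - (∑ s : S, ∑ a : A, stateDist P ρ π' t s * π' s a * P s a s')| ≤ _
        rw [← Finset.sum_sub_distrib]
        refine (Finset.abs_sum_le_sum_abs _ _).trans (Finset.sum_le_sum fun s _ => ?_)
        rw [← Finset.sum_sub_distrib]
        refine (Finset.abs_sum_le_sum_abs _ _).trans (Finset.sum_le_sum fun a _ => ?_)
        rw [← sub_mul, abs_mul, abs_of_nonneg (hP0 s a s')]
      calc ∑ s' : S, |stateDist P ρ π (t+1) s' - stateDist P ρ π' (t+1) s'|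
          ≤ ∑ s' : S, ∑ s : S, ∑ a : A,
              |stateDist P ρ π t s * π s a - stateDist P ρ π' t s * π' s a| * P s a s' :=
            Finset.sum_le_sum fun s' _ => h1 s'
        _ = ∑ s : S, ∑ a : A,
              |stateDist P ρ π t s * π s a - stateDist P ρ π' t s * π' s a| := by
            rw [Finset.sum_comm]
            congr 1; funext s
            rw [Finset.sum_comm]
            congr 1; funext a
            rw [← Finset.mul_sum, hP1, mul_one]
        _ ≤ ∑ s : S, ∑ a : A,
              (|stateDist P ρ π t s - stateDist P ρ π' t s| * π' s a
               + stateDist P ρ π t s * |π s a - π' s a|) := by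
            refine Finset.sum_le_sum fun s _ => Finset.sum_le_sum fun a _ => ?_
            have : stateDist P ρ π t s * π s a - stateDist P ρ π' t s * π' s a
                = (stateDist P ρ π t s - stateDist P ρ π' t s) * π' s a
                  + stateDist P ρ π t s * (π s a - π' s a) := by ring
            rw [this]
            refine (abs_add_le _ _).trans ?_
            rw [abs_mul, abs_mul, abs_of_nonneg (hπ0' s a),
              abs_of_nonneg (stateDist_nonneg hP0 hρ0 hπ0 t s)]
        _ = (∑ s : S, |stateDist P ρ π t s - stateDist P ρ π' t s|)
              + ∑ s : S, stateDist P ρ π t s * ∑ a : A, |π s a - π' s a| := by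
            rw [← Finset.sum_add_distrib]
            congr 1; funext s
            rw [Finset.sum_add_distrib, ← Finset.mul_sum, ← Finset.mul_sum, hπ1', mul_one]
    rw [Finset.sum_range_succ]
    exact step.trans (by linarith [ih])

private lemma jval_diff (hP0 : ∀ s a s', 0 ≤ P s a s')
    (hP1 : ∀ s a, ∑ s' : S, P s a s' = 1)
    (hρ0 : ∀ s, 0 ≤ ρ s)
    {r : S → A → ℝ} (hr0 : ∀ s a, 0 ≤ r s a) (hr1 : ∀ s a, r s a ≤ 1)
    (hπ0 : ∀ s a, 0 ≤ π s a) (hπ1 : ∀ s, ∑ a : A, π s a = 1)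
    (hπ0' : ∀ s a, 0 ≤ π' s a) (hπ1' : ∀ s, ∑ a : A, π' s a = 1)
    (H : ℕ) :
    Jval P ρ r π H - Jval P ρ r π' H
      ≤ (H : ℝ) * ∑ t ∈ Finset.range H, ∑ s : S,
          stateDist P ρ π t s * ∑ a : A, |π s a - π' s a| := by
  set T := ∑ t ∈ Finset.range H, ∑ s : S,
      stateDist P ρ π t s * ∑ a : A, |π s a - π' s a| with hT
  have hterm_nonneg : ∀ t, 0 ≤ ∑ s : S,
      stateDist P ρ π t s * ∑ a : A, |π s a - π' s a| := by
    intro t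
    exact Finset.sum_nonneg fun s _ => mul_nonneg (stateDist_nonneg hP0 hρ0 hπ0 t s)
      (Finset.sum_nonneg fun a _ => abs_nonneg _)
  have key : ∀ t ∈ Finset.range H,
      (∑ s : S, stateDist P ρ π t s * ∑ a : A, π s a * r s a)
        - (∑ s : S, stateDist P ρ π' t s * ∑ a : A, π' s a * r s a) ≤ T := by
    intro t htH
    have h1 : (∑ s : S, stateDist P ρ π t s * ∑ a : A, π s a * r s a)
        - (∑ s : S, stateDist P ρ π' t s * ∑ a : A, π' s a * r s a)
        ≤ (∑ s : S, |stateDist P ρ π t s - stateDist P ρ π' t s|)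
          + ∑ s : S, stateDist P ρ π t s * ∑ a : A, |π s a - π' s a| := by
      rw [← Finset.sum_sub_distrib, ← Finset.sum_add_distrib]
      refine Finset.sum_le_sum fun s _ => ?_
      have hd := stateDist_nonneg hP0 hρ0 hπ0 t s
      have e : stateDist P ρ π t s * (∑ a : A, π s a * r s a)
          - stateDist P ρ π' t s * (∑ a : A, π' s a * r s a)
          = (stateDist P ρ π t s - stateDist P ρ π' t s) * (∑ a : A, π' s a * r s a)
            + stateDist P ρ π t s * (∑ a : A, (π s a - π' s a) * r s a) := by
        rw [Finset.mul_sum, Finset.mul_sum, Finset.mul_sum, Finset.mul_sum,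
          ← Finset.sum_add_distrib, ← Finset.sum_sub_distrib]
        exact Finset.sum_congr rfl fun a _ => by ring
      rw [e]
      have hb1 : (stateDist P ρ π t s - stateDist P ρ π' t s) * (∑ a : A, π' s a * r s a)
          ≤ |stateDist P ρ π t s - stateDist P ρ π' t s| := by
        have hR0 : 0 ≤ ∑ a : A, π' s a * r s a :=
          Finset.sum_nonneg fun a _ => mul_nonneg (hπ0' s a) (hr0 s a)
        have hR1 : (∑ a : A, π' s a * r s a) ≤ 1 := by
          calc (∑ a : A, π' s a * r s a) ≤ ∑ a : A, π' s a :=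
                Finset.sum_le_sum fun a _ => by
                  nlinarith [hπ0' s a, hr1 s a, hr0 s a]
            _ = 1 := hπ1' s
        calc (stateDist P ρ π t s - stateDist P ρ π' t s) * (∑ a : A, π' s a * r s a)
            ≤ |stateDist P ρ π t s - stateDist P ρ π' t s| * (∑ a : A, π' s a * r s a) :=
              mul_le_mul_of_nonneg_right (le_abs_self _) hR0
          _ ≤ |stateDist P ρ π t s - stateDist P ρ π' t s| * 1 :=
              mul_le_mul_of_nonneg_left hR1 (abs_nonneg _)
          _ = _ := mul_one _
      have hb2 : stateDist P ρ π t s * (∑ a : A, (π s a - π' s a) * r s a)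
          ≤ stateDist P ρ π t s * ∑ a : A, |π s a - π' s a| := by
        refine mul_le_mul_of_nonneg_left ?_ hd
        refine Finset.sum_le_sum fun a _ => ?_
        calc (π s a - π' s a) * r s a ≤ |(π s a - π' s a) * r s a| := le_abs_self _
          _ = |π s a - π' s a| * |r s a| := abs_mul _ _
          _ ≤ |π s a - π' s a| * 1 := by
              refine mul_le_mul_of_nonneg_left ?_ (abs_nonneg _)
              rw [abs_of_nonneg (hr0 s a)]; exact hr1 s a
          _ = _ := mul_one _
      linarith
    have h2 : (∑ s : S, |stateDist P ρ π t s - stateDist P ρ π' t s|)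
        ≤ ∑ t' ∈ Finset.range t, ∑ s : S,
            stateDist P ρ π t' s * ∑ a : A, |π s a - π' s a| :=
      err_bound hP0 hP1 hρ0 hπ0 hπ1 hπ0' hπ1' t
    have h3 : (∑ t' ∈ Finset.range t, ∑ s : S,
            stateDist P ρ π t' s * ∑ a : A, |π s a - π' s a|)
        + (∑ s : S, stateDist P ρ π t s * ∑ a : A, |π s a - π' s a|) ≤ T := by
      rw [hT]
      have : (∑ t' ∈ Finset.range t, ∑ s : S,
            stateDist P ρ π t' s * ∑ a : A, |π s a - π' s a|)
          + (∑ s : S, stateDist P ρ π t s * ∑ a : A, |π s a - π' s a|)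
          = ∑ t' ∈ Finset.range (t+1), ∑ s : S,
              stateDist P ρ π t' s * ∑ a : A, |π s a - π' s a| := by
        rw [Finset.sum_range_succ]
      rw [this]
      refine Finset.sum_le_sum_of_subset_of_nonneg ?_ fun i _ _ => hterm_nonneg i
      exact Finset.range_subset_range.2 (Finset.mem_range.1 htH)
    linarith
  calc Jval P ρ r π H - Jval P ρ r π' H
      = ∑ t ∈ Finset.range H,
          ((∑ s : S, stateDist P ρ π t s * ∑ a : A, π s a * r s a)
            - (∑ s : S, stateDist P ρ π' t s * ∑ a : A, π' s a * r s a)) := by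
        rw [Jval, Jval, ← Finset.sum_sub_distrib]
    _ ≤ ∑ t ∈ Finset.range H, T := Finset.sum_le_sum key
    _ = (H:ℝ) * T := by rw [Finset.sum_const, Finset.card_range, nsmul_eq_mul]

end MDP

/-- Target regret bound for off-dynamics RCSL (Theorem A.3): under bounded occupancy
mismatch, return coverage, and domain occupancy overlap, the regret of the estimated
return-conditioned policy is bounded by
`(C/α)·((N_S+N_T)/(N_S/γ+N_T))·H²·sqrt(2·L(πhat))`. -/
theorem rcsl_target_regret
    {S A G : Type*} [Fintype S] [Fintype A] [Fintype G]
    (P : S → A → S → ℝ) (ρ : S → ℝ) (r : S → A → ℝ) (H : ℕ) (hH : 0 < H)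
    (hP0 : ∀ s a s', 0 ≤ P s a s') (hP1 : ∀ s a, ∑ s' : S, P s a s' = 1)
    (hρ0 : ∀ s, 0 ≤ ρ s) (hρ1 : ∑ s : S, ρ s = 1)
    (hr0 : ∀ s a, 0 ≤ r s a) (hr1 : ∀ s a, r s a ≤ 1)
    -- behavior policy and conditional return distribution in the target domain
    (β : S → A → ℝ) (hβ0 : ∀ s a, 0 ≤ β s a) (hβ1 : ∀ s, ∑ a : A, β s a = 1)
    (Pg : S → A → G → ℝ) (hPg0 : ∀ s a g, 0 ≤ Pg s a g)
    (hPg1 : ∀ s a, ∑ g : G, Pg s a g = 1)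
    -- conditioning function and the induced RCSL policy
    (f : S → G)
    (πβg : S → G → A → ℝ)
    (hπβg : ∀ s g a, πβg s g a
      = β s a * Pg s a g / (∑ a' : A, β s a' * Pg s a' g))
    (πf : S → A → ℝ) (hπf : ∀ s a, πf s a = πβg s (f s) a)
    -- estimated return-conditioned policy
    (πhat : S → G → A → ℝ) (hπhat0 : ∀ s g a, 0 < πhat s g a)
    (hπhat1 : ∀ s g, ∑ a : A, πhat s g a = 1)
    (πhatf : S → A → ℝ) (hπhatf : ∀ s a, πhatf s a = πhat s (f s) a)
    -- behavior occupancies in the target and source environments, and the mixture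
    (dβT dβS : S → ℝ)
    (hdβT0 : ∀ s, 0 ≤ dβT s) (hdβT1 : ∑ s : S, dβT s = 1)
    (hdβS0 : ∀ s, 0 ≤ dβS s) (hdβS1 : ∑ s : S, dβS s = 1)
    (NS NT : ℝ) (hNS : 0 < NS) (hNT : 0 < NT)
    (dmix : S → ℝ)
    (hdmix : ∀ s, dmix s = NT / (NT + NS) * dβT s + NS / (NT + NS) * dβS s)
    -- assumptions (i) bounded occupancy mismatch, (ii) return coverage,
    -- (iii) domain occupancy overlap
    (C α γ : ℝ) (hC : 1 ≤ C) (hα : 0 < α) (hγ : 1 ≤ γ)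
    (hmismatch : ∀ s, occupancy P ρ πf H s ≤ C * dβT s)
    (hcoverage : ∀ s, α ≤ ∑ a : A, β s a * Pg s a (f s))
    (hoverlap : ∀ s, dβT s ≤ γ * dβS s)
    -- the KL training loss
    (L : ℝ)
    (hL : L = ∑ s : S, dmix s * ∑ g : G,
        (∑ a : A, β s a * Pg s a g) *
          ∑ a : A, πβg s g a * Real.log (πβg s g a / πhat s g a)) :
    Jval P ρ r πf H - Jval P ρ r πhatf H
      ≤ (C / α) * ((NS + NT) / (NS / γ + NT)) * (H : ℝ) ^ 2 * Real.sqrt (2 * L) := by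
  classical
  -- Basic positivity facts
  have hSne : Nonempty S := by
    by_contra h
    rw [not_nonempty_iff] at h
    rw [Finset.univ_eq_empty, Finset.sum_empty] at hρ1
    exact one_ne_zero hρ1.symm
  have hα0 := hα
  have hγ0 : (0:ℝ) < γ := lt_of_lt_of_le one_pos hγ
  have hκden : (0:ℝ) < NS / γ + NT := by positivity
  have hNTS : (0:ℝ) < NT + NS := by linarith
  set κ : ℝ := (NS + NT) / (NS / γ + NT) with hκ
  have hκ1 : 1 ≤ κ := by
    rw [hκ, le_div_iff₀ hκden]
    have : NS / γ ≤ NS := div_le_self hNS.le hγ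
    linarith
  have hα1 : α ≤ 1 := by
    obtain ⟨s⟩ := hSne
    have h1 : ∀ a : A, Pg s a (f s) ≤ 1 := by
      intro a
      have := Finset.single_le_sum (f := fun g => Pg s a g)
        (fun g _ => hPg0 s a g) (Finset.mem_univ (f s))
      rw [hPg1 s a] at this
      exact this
    calc α ≤ ∑ a : A, β s a * Pg s a (f s) := hcoverage s
      _ ≤ ∑ a : A, β s a := Finset.sum_le_sum fun a _ => by
          nlinarith [hβ0 s a, h1 a, hPg0 s a (f s)]
      _ = 1 := hβ1 s
  -- πf and πhatf are probability policies
  have hdenpos : ∀ s, 0 < ∑ a' : A, β s a' * Pg s a' (f s) :=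
    fun s => lt_of_lt_of_le hα (hcoverage s)
  have hπf0 : ∀ s a, 0 ≤ πf s a := fun s a => by
    rw [hπf, hπβg]
    exact div_nonneg (mul_nonneg (hβ0 s a) (hPg0 s a (f s))) (hdenpos s).le
  have hπf1 : ∀ s, ∑ a : A, πf s a = 1 := fun s => by
    simp only [hπf, hπβg]
    rw [← Finset.sum_div, div_self (ne_of_gt (hdenpos s))]
  have hπhatf0 : ∀ s a, 0 ≤ πhatf s a := fun s a => by
    rw [hπhatf]; exact (hπhat0 s (f s) a).le
  have hπhatf1 : ∀ s, ∑ a : A, πhatf s a = 1 := fun s => by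
    simp only [hπhatf]; exact hπhat1 s (f s)
  -- total variation and KL quantities
  set D : S → ℝ := fun s => ∑ a : A, |πf s a - πhatf s a| with hD
  have hD0 : ∀ s, 0 ≤ D s := fun s => Finset.sum_nonneg fun a _ => abs_nonneg _
  set klf : S → G → ℝ :=
    fun s g => ∑ a : A, πβg s g a * Real.log (πβg s g a / πhat s g a) with hklf
  set inr : S → ℝ :=
    fun s => ∑ g : G, (∑ a : A, β s a * Pg s a g) * klf s g with hinr
  have hL' : L = ∑ s : S, dmix s * inr s := hL
  -- Pinsker at the conditioning return
  have hpinsq : ∀ s, D s ^ 2 ≤ 2 * klf s (f s) := by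
    intro s
    have hp0 : ∀ a, 0 ≤ πβg s (f s) a := fun a => by rw [← hπf]; exact hπf0 s a
    have hp1 : ∑ a : A, πβg s (f s) a = 1 := by
      rw [show (∑ a : A, πβg s (f s) a) = ∑ a : A, πf s a from
        Finset.sum_congr rfl fun a _ => (hπf s a).symm]
      exact hπf1 s
    have hp := pinsker_fin (fun a => πβg s (f s) a) (fun a => πhat s (f s) a)
      hp0 hp1 (fun a => hπhat0 s (f s) a) (hπhat1 s (f s))
    have hDs : D s = ∑ a : A, |πβg s (f s) a - πhat s (f s) a| := by
      rw [hD]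
      exact Finset.sum_congr rfl fun a _ => by rw [hπf, hπhatf]
    rw [hDs]
    exact hp
  have hklfnn : ∀ s, 0 ≤ klf s (f s) := fun s => by
    have := hpinsq s
    nlinarith [sq_nonneg (D s)]
  have hpins : ∀ s, D s ≤ Real.sqrt (2 * klf s (f s)) := fun s => by
    rw [Real.le_sqrt (hD0 s) (by linarith [hklfnn s])]
    exact hpinsq s
  -- each weighted KL term is nonnegative
  have hW : ∀ s g, 0 ≤ (∑ a : A, β s a * Pg s a g) * klf s g := by
    intro s g
    rcases eq_or_lt_of_le (Finset.sum_nonneg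
      (fun a (_ : a ∈ Finset.univ) => mul_nonneg (hβ0 s a) (hPg0 s a g))) with h0 | hpos
    · rw [← h0, zero_mul]
    · refine mul_nonneg hpos.le ?_
      have hp0 : ∀ a, 0 ≤ πβg s g a := fun a => by
        rw [hπβg]
        exact div_nonneg (mul_nonneg (hβ0 s a) (hPg0 s a g)) hpos.le
      have hp1 : ∑ a : A, πβg s g a = 1 := by
        simp only [hπβg]
        rw [← Finset.sum_div, div_self (ne_of_gt hpos)]
      have hp := pinsker_fin (fun a => πβg s g a) (fun a => πhat s g a)
        hp0 hp1 (fun a => hπhat0 s g a) (hπhat1 s g)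
      nlinarith [sq_nonneg (∑ a : A, |πβg s g a - πhat s g a|)]
  have hinr0 : ∀ s, 0 ≤ inr s := fun s =>
    Finset.sum_nonneg fun g _ => hW s g
  -- coverage: α · KL(s, f s) ≤ inner sum
  have hInner : ∀ s, α * klf s (f s) ≤ inr s := by
    intro s
    have h1 : α * klf s (f s) ≤ (∑ a : A, β s a * Pg s a (f s)) * klf s (f s) :=
      mul_le_mul_of_nonneg_right (hcoverage s) (hklfnn s)
    have h2 : (∑ a : A, β s a * Pg s a (f s)) * klf s (f s) ≤ inr s := by
      rw [hinr]
      exact Finset.single_le_sum (f := fun g => (∑ a : A, β s a * Pg s a g) * klf s g)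
        (fun g _ => hW s g) (Finset.mem_univ (f s))
    linarith
  -- mixture change of measure
  have hdmix0 : ∀ s, 0 ≤ dmix s := fun s => by
    rw [hdmix]
    have h1 : (0:ℝ) ≤ NT / (NT + NS) := by positivity
    have h2 : (0:ℝ) ≤ NS / (NT + NS) := by positivity
    exact add_nonneg (mul_nonneg h1 (hdβT0 s)) (mul_nonneg h2 (hdβS0 s))
  have hsf : ∀ s, dβT s ≤ κ * dmix s := by
    intro s
    have h1 : dβT s / γ ≤ dβS s := by
      rw [div_le_iff₀ hγ0]
      linarith [hoverlap s]
    rw [hκ, div_mul_eq_mul_div, le_div_iff₀ hκden]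
    have e : (NS + NT) * dmix s = NT * dβT s + NS * dβS s := by
      rw [hdmix]
      field_simp
      ring
    rw [e]
    have h2 : dβT s * (NS / γ + NT) = NS * (dβT s / γ) + NT * dβT s := by ring
    rw [h2]
    have h3 : NS * (dβT s / γ) ≤ NS * dβS s := mul_le_mul_of_nonneg_left h1 hNS.le
    linarith
  -- chain of bounds
  have hLnn : 0 ≤ L := by
    rw [hL']
    exact Finset.sum_nonneg fun s _ => mul_nonneg (hdmix0 s) (hinr0 s)
  have step1 : Jval P ρ r πf H - Jval P ρ r πhatf H
      ≤ (H : ℝ) * ∑ t ∈ Finset.range H, ∑ s : S, stateDist P ρ πf t s * D s :=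
    jval_diff hP0 hP1 hρ0 hr0 hr1 hπf0 hπf1 hπhatf0 hπhatf1 H
  have occeq : ∑ t ∈ Finset.range H, ∑ s : S, stateDist P ρ πf t s * D s
      = (H : ℝ) * ∑ s : S, occupancy P ρ πf H s * D s := by
    rw [Finset.sum_comm, Finset.mul_sum]
    refine Finset.sum_congr rfl fun s _ => ?_
    rw [occupancy, ← Finset.sum_mul]
    have hHne : (H:ℝ) ≠ 0 := Nat.cast_ne_zero.2 hH.ne'
    field_simp
  have step2 : ∑ s : S, occupancy P ρ πf H s * D s ≤ C * ∑ s : S, dβT s * D s := by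
    rw [Finset.mul_sum]
    refine Finset.sum_le_sum fun s _ => ?_
    calc occupancy P ρ πf H s * D s ≤ (C * dβT s) * D s :=
          mul_le_mul_of_nonneg_right (hmismatch s) (hD0 s)
      _ = C * (dβT s * D s) := by ring
  have step3 : ∑ s : S, dβT s * D s ≤ ∑ s : S, dβT s * Real.sqrt (2 * klf s (f s)) :=
    Finset.sum_le_sum fun s _ => mul_le_mul_of_nonneg_left (hpins s) (hdβT0 s)
  have hdklnn : 0 ≤ ∑ s : S, dβT s * klf s (f s) :=
    Finset.sum_nonneg fun s _ => mul_nonneg (hdβT0 s) (hklfnn s)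
  have step4 : ∑ s : S, dβT s * Real.sqrt (2 * klf s (f s))
      ≤ Real.sqrt (2 * ∑ s : S, dβT s * klf s (f s)) := by
    have cs := Finset.sum_mul_sq_le_sq_mul_sq Finset.univ
      (fun s => Real.sqrt (dβT s))
      (fun s => Real.sqrt (dβT s) * Real.sqrt (2 * klf s (f s)))
    have e0 : ∀ s : S, Real.sqrt (dβT s) * (Real.sqrt (dβT s) * Real.sqrt (2 * klf s (f s)))
        = dβT s * Real.sqrt (2 * klf s (f s)) := fun s => by
      rw [← mul_assoc, Real.mul_self_sqrt (hdβT0 s)]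
    have e1 : ∀ s : S, Real.sqrt (dβT s) ^ 2 = dβT s := fun s => Real.sq_sqrt (hdβT0 s)
    have e2 : ∀ s : S, (Real.sqrt (dβT s) * Real.sqrt (2 * klf s (f s))) ^ 2
        = dβT s * (2 * klf s (f s)) := fun s => by
      rw [mul_pow, Real.sq_sqrt (hdβT0 s), Real.sq_sqrt (by linarith [hklfnn s] : (0:ℝ) ≤ 2 * klf s (f s))]
    simp only [e0, e1, e2] at cs
    rw [hdβT1, one_mul] at cs
    have e3 : ∑ s : S, dβT s * (2 * klf s (f s)) = 2 * ∑ s : S, dβT s * klf s (f s) := by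
      rw [Finset.mul_sum]
      exact Finset.sum_congr rfl fun s _ => by ring
    rw [e3] at cs
    rw [Real.le_sqrt (Finset.sum_nonneg fun s _ =>
      mul_nonneg (hdβT0 s) (Real.sqrt_nonneg _)) (by linarith [hdklnn])]
    exact cs
  have step5 : ∑ s : S, dβT s * klf s (f s) ≤ (κ / α) * L := by
    have h1 : ∀ s, klf s (f s) ≤ inr s / α := fun s => by
      rw [le_div_iff₀ hα]
      linarith [hInner s]
    calc ∑ s : S, dβT s * klf s (f s)
        ≤ ∑ s : S, (κ * dmix s) * klf s (f s) :=
          Finset.sum_le_sum fun s _ =>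
            mul_le_mul_of_nonneg_right (hsf s) (hklfnn s)
      _ ≤ ∑ s : S, (κ * dmix s) * (inr s / α) :=
          Finset.sum_le_sum fun s _ =>
            mul_le_mul_of_nonneg_left (h1 s)
              (mul_nonneg (le_trans zero_le_one hκ1) (hdmix0 s))
      _ = (κ / α) * ∑ s : S, dmix s * inr s := by
          rw [Finset.mul_sum]
          exact Finset.sum_congr rfl fun s _ => by ring
      _ = (κ / α) * L := by rw [hL']
  have hκα1 : 1 ≤ κ / α := by
    rw [le_div_iff₀ hα]
    linarith
  have hκα0 : 0 ≤ κ / α := le_trans zero_le_one hκα1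
  have step6 : Real.sqrt (2 * ∑ s : S, dβT s * klf s (f s))
      ≤ (κ / α) * Real.sqrt (2 * L) := by
    calc Real.sqrt (2 * ∑ s : S, dβT s * klf s (f s))
        ≤ Real.sqrt ((κ / α) * (2 * L)) := by
          apply Real.sqrt_le_sqrt
          calc 2 * ∑ s : S, dβT s * klf s (f s) ≤ 2 * ((κ / α) * L) := by linarith
            _ = (κ / α) * (2 * L) := by ring
      _ = Real.sqrt (κ / α) * Real.sqrt (2 * L) := Real.sqrt_mul hκα0 _
      _ ≤ (κ / α) * Real.sqrt (2 * L) := by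
          refine mul_le_mul_of_nonneg_right ?_ (Real.sqrt_nonneg _)
          calc Real.sqrt (κ / α) ≤ Real.sqrt ((κ / α) ^ 2) :=
                Real.sqrt_le_sqrt (by nlinarith)
            _ = κ / α := Real.sqrt_sq hκα0
  -- assemble everything
  have hC0 : (0:ℝ) ≤ C := le_trans zero_le_one hC
  have hH2 : (0:ℝ) ≤ (H:ℝ)^2 := sq_nonneg _
  calc Jval P ρ r πf H - Jval P ρ r πhatf H
      ≤ (H : ℝ) * ∑ t ∈ Finset.range H, ∑ s : S, stateDist P ρ πf t s * D s := step1
    _ = (H : ℝ)^2 * ∑ s : S, occupancy P ρ πf H s * D s := by rw [occeq]; ring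
    _ ≤ (H : ℝ)^2 * (C * ∑ s : S, dβT s * D s) :=
        mul_le_mul_of_nonneg_left step2 hH2
    _ ≤ (H : ℝ)^2 * (C * ∑ s : S, dβT s * Real.sqrt (2 * klf s (f s))) := by
        refine mul_le_mul_of_nonneg_left (mul_le_mul_of_nonneg_left step3 hC0) hH2
    _ ≤ (H : ℝ)^2 * (C * Real.sqrt (2 * ∑ s : S, dβT s * klf s (f s))) := by
        refine mul_le_mul_of_nonneg_left (mul_le_mul_of_nonneg_left step4 hC0) hH2
    _ ≤ (H : ℝ)^2 * (C * ((κ / α) * Real.sqrt (2 * L))) := by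
        refine mul_le_mul_of_nonneg_left (mul_le_mul_of_nonneg_left step6 hC0) hH2
    _ = C / α * κ * (H : ℝ)^2 * Real.sqrt (2 * L) := by ring
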